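/- Let J : ℝⁿ → ℝ be convex, let H : ℝⁿ → ℝ be convex and Fréchet differentiable with gradient ∇H, let λ > 0, let v, p ∈ ℝⁿ with p a subgradient of J at v, and suppose u⁺ minimizes u ↦ J(u) − J(v) − ⟨p, u − v⟩ + λ H(u) over ℝⁿ. Then p − λ ∇H(u⁺) is a subgradient of J at u⁺. -/

import Mathlib

open RealInnerProductSpace

/-- Bregman dual update: if `p` is a subgradient of the convex function `J` at `v`, `H` is
convex and differentiable with gradient `∇H`, and `u⁺` minimizes
`u ↦ J(u) − J(v) − ⟨p, u − v⟩ + λH(u)`, then `p − λ∇H(u⁺)` is a subgradient of `J` at `u⁺`. -/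
theorem stmt_6 (n : ℕ) (J H : EuclideanSpace ℝ (Fin n) → ℝ)
    (hJ : ConvexOn ℝ Set.univ J) (hH : ConvexOn ℝ Set.univ H)
    (gradH : EuclideanSpace ℝ (Fin n) → EuclideanSpace ℝ (Fin n))
    (hgradH : ∀ x, HasGradientAt H (gradH x) x)
    (lam : ℝ) (hlam : 0 < lam)
    (v p uplus : EuclideanSpace ℝ (Fin n))
    (hp : ∀ u, J v + ⟪p, u - v⟫ ≤ J u)
    (hmin : ∀ u, J uplus - J v - ⟪p, uplus - v⟫ + lam * H uplus
      ≤ J u - J v - ⟪p, u - v⟫ + lam * H u) :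
    ∀ u, J uplus + ⟪p - lam • gradH uplus, u - uplus⟫ ≤ J u := by
  intro u
  set d : EuclideanSpace ℝ (Fin n) := u - uplus with hd
  -- the function along the segment
  set g : ℝ → ℝ := fun t => H (uplus + t • d) with hg
  -- derivative of g at 0
  have hγ : HasDerivAt (fun t : ℝ => uplus + t • d) d 0 := by
    simpa using ((hasDerivAt_id (0:ℝ)).smul_const d).const_add uplus
  have hgd : HasDerivAt g ⟪gradH uplus, d⟫ 0 := by
    have h1 := (hgradH (uplus + (0:ℝ) • d)).hasFDerivAt.comp_hasDerivAt 0 hγ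
    simp only [zero_smul, add_zero] at h1
    exact h1
  set c : ℝ := (J uplus - J u + ⟪p, d⟫) / lam with hc
  -- key inequality on slopes
  have hslope : ∀ t ∈ Set.Ioc (0:ℝ) 1, c ≤ slope g 0 t := by
    intro t ht
    obtain ⟨ht0, ht1⟩ := ht
    have hw : uplus + t • d = (1 - t) • uplus + t • u := by
      simp [hd, smul_sub, sub_smul]
      module
    have hJw : J (uplus + t • d) ≤ (1 - t) * J uplus + t * J u := by
      rw [hw]
      have := hJ.2 (Set.mem_univ uplus) (Set.mem_univ u)
        (by linarith : (0:ℝ) ≤ 1 - t) ht0.le (by ring)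
      simpa [smul_eq_mul] using this
    have hm := hmin (uplus + t • d)
    have hip : ⟪p, uplus + t • d - v⟫ = ⟪p, uplus - v⟫ + t * ⟪p, d⟫ := by
      have : uplus + t • d - v = (uplus - v) + t • d := by abel
      rw [this, inner_add_right, real_inner_smul_right]
    have key : t * (J uplus - J u + ⟪p, d⟫) ≤ lam * (g t - g 0) := by
      have hg0 : g 0 = H uplus := by simp [hg]
      have hgt : g t = H (uplus + t • d) := rfl
      nlinarith [hm, hJw, hip]
    rw [slope_def_field, sub_zero]
    rw [hc, div_le_div_iff₀ hlam ht0]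
    nlinarith [key]
  -- pass to the limit t → 0⁺
  have hcle : c ≤ ⟪gradH uplus, d⟫ := by
    have htend : Filter.Tendsto (slope g 0) (nhdsWithin 0 (Set.Ioi 0)) (nhds ⟪gradH uplus, d⟫) :=
      (hasDerivAt_iff_tendsto_slope.mp hgd).mono_left
        (nhdsWithin_mono _ (fun x hx => ne_of_gt hx))
    refine ge_of_tendsto htend ?_
    filter_upwards [Ioc_mem_nhdsGT_of_mem (Set.mem_Ico.mpr ⟨le_refl 0, one_pos⟩)] with t ht
      using hslope t ht
  -- conclude
  have hinner : ⟪p - lam • gradH uplus, d⟫ = ⟪p, d⟫ - lam * ⟪gradH uplus, d⟫ := by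
    rw [inner_sub_left, real_inner_smul_left]
  rw [hinner]
  rw [hc, div_le_iff₀ hlam] at hcle
  linarith
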